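/- In the setting of Theorem 2, suppose an optimal configuration contains an edge ab of G such that (1) either a ∈ V(G₁) or a belongs to the reservoir R(w) of some cascade vertex w, and (2) b ∈ V(G_i) for some i ∈ {2, 3, …, k}, b ≠ v_i, and b does not belong to any reservoir. Then the cascade of G_i is not the null sequence and b is the last vertex of the cascade of G_i. -/

import Mathlib

/-- A graph `G` on a finite vertex type is `k`-connected if it has more than `k`
vertices and remains connected after deleting any set of fewer than `k` vertices. -/
def KConnected {V : Type} [Fintype V] (G : SimpleGraph V) (k : ℕ) : Prop :=
  k < Fintype.card V ∧
    ∀ D : Finset V, D.card < k → (G.induce ((↑D : Set V)ᶜ)).Connected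

/-- The reservoir of `w` (inside the part with vertex set `A` and root `vi`):
the set of vertices of `A` connected to `vi` by a path in the graph induced on
`A` minus `w`.  (So `w` is not in its own reservoir, and the reservoir of `vi`
itself is empty.) -/
def reservoir {V : Type} (G : SimpleGraph V) (A : Set V) (vi w : V) : Set V :=
  {u | ∃ (hu : u ∈ A \ {w}) (hv : vi ∈ A \ {w}),
    (G.induce (A \ {w})).Reachable ⟨vi, hv⟩ ⟨u, hu⟩}

/-- A configuration: pairwise disjoint connected vertex sets `A i` with
`|A i| = m i` and `v i ∈ A i`, together with exactly one cascade `c i` in each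
part `i ≠ 0` (the cascade of part `0` is null).  A cascade in part `i` is a
sequence of distinct vertices of `A i`, all different from `v i`, in which each
vertex is not in the reservoir of the previous one. -/
structure Config {V : Type} [Fintype V] (G : SimpleGraph V) (k : ℕ) [NeZero k]
    (v : Fin k → V) (m : Fin k → ℕ) where
  A : Fin k → Set V
  c : Fin k → List V
  disj : Pairwise fun i j => Disjoint (A i) (A j)
  conn : ∀ i, (G.induce (A i)).Connected
  hcard : ∀ i, (A i).ncard = m i
  hmem : ∀ i, v i ∈ A i
  c_zero : c 0 = []
  c_nodup : ∀ i, (c i).Nodup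
  c_mem : ∀ i, ∀ w ∈ c i, w ∈ A i ∧ w ≠ v i
  c_chain : ∀ i, (c i).Chain' fun a b => b ∉ reservoir G (A i) (v i) a

variable {V : Type} [Fintype V] {G : SimpleGraph V} {k : ℕ} [NeZero k]
  {v : Fin k → V} {m : Fin k → ℕ}

/-- A cascade vertex is a vertex belonging to one of the cascades. -/
def IsCascadeVertex (cfg : Config G k v m) (w : V) : Prop :=
  ∃ i, w ∈ cfg.c i

/-- `RankLink cfg P w` says: `w` is a cascade vertex of some part `i` and there
is a cascade vertex `w'` of a different part `j` satisfying `P` such that `w`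
has a neighbor in the reservoir of `w'`. -/
def RankLink (cfg : Config G k v m) (P : V → Prop) (w : V) : Prop :=
  ∃ i j : Fin k, i ≠ j ∧ w ∈ cfg.c i ∧
    ∃ w' ∈ cfg.c j, P w' ∧ ∃ u ∈ reservoir G (cfg.A j) (v j) w', G.Adj w u

/-- `HasRank cfg r w` says the cascade vertex `w` has rank `r`: rank `1` means
`w` has a neighbor in part `0`; otherwise the rank is the least `r ≥ 2` such
that `w` has a neighbor in the reservoir of a cascade vertex of rank `r - 1`
in a different part. -/
def HasRank (cfg : Config G k v m) : ℕ → V → Prop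
  | 0 => fun _ => False
  | 1 => fun w => IsCascadeVertex cfg w ∧ ∃ u ∈ cfg.A 0, G.Adj w u
  | r + 2 => fun w =>
      IsCascadeVertex cfg w ∧ (¬ ∃ u ∈ cfg.A 0, G.Adj w u) ∧
      RankLink cfg (HasRank cfg (r + 1)) w ∧
      ∀ s, s < r → ¬ RankLink cfg (HasRank cfg (s + 1)) w

/-- A configuration is valid if every cascade vertex has a well-defined rank and
the rank is strictly increasing along each cascade. -/
def Valid (cfg : Config G k v m) : Prop :=
  (∀ w, IsCascadeVertex cfg w → ∃ r, HasRank cfg r w) ∧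
  ∀ i, (cfg.c i).Pairwise fun a b =>
    ∀ ra rb, HasRank cfg ra a → HasRank cfg rb b → ra < rb

/-- `rho cfg r` is the total number of vertices belonging to the reservoir of
some cascade vertex of rank `r`. -/
noncomputable def rho (cfg : Config G k v m) (r : ℕ) : ℕ :=
  {u | ∃ i, ∃ w ∈ cfg.c i, HasRank cfg r w ∧
    u ∈ reservoir G (cfg.A i) (v i) w}.ncard

/-- A valid configuration is `r`-optimal if, among all valid configurations, it
maximizes `rho 1`, subject to that maximizes `rho 2`, and so on up to `rho r`.
(`ROptimal cfg 0` just says the configuration is valid.) -/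
def ROptimal (cfg : Config G k v m) : ℕ → Prop
  | 0 => Valid cfg
  | r + 1 => ROptimal cfg r ∧
      ∀ cfg' : Config G k v m, ROptimal cfg' r →
        rho cfg' (r + 1) ≤ rho cfg (r + 1)

/-- A configuration is optimal if it is `r`-optimal for every `r`. -/
def Optimal (cfg : Config G k v m) : Prop := ∀ r, ROptimal cfg r

/-- `u` belongs to the reservoir of some cascade vertex. -/
def InReservoir (cfg : Config G k v m) (u : V) : Prop :=
  ∃ i, ∃ w ∈ cfg.c i, u ∈ reservoir G (cfg.A i) (v i) w

/-- A bridge: an edge of `G` with one end in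
`S = V(G) − V(G₁) − ⋯ − V(G_k)` and the other end in the reservoir of a
cascade vertex. -/
def IsBridgeEdge (cfg : Config G k v m) (a b : V) : Prop :=
  G.Adj a b ∧ (∀ i, a ∉ cfg.A i) ∧ InReservoir cfg b

section GraphAux
open SimpleGraph
variable {V : Type} {G : SimpleGraph V}

lemma reach_mono {s t : Set V} (hst : s ⊆ t) {x y : V} (hx : x ∈ s) (hy : y ∈ s)
    (h : (G.induce s).Reachable ⟨x, hx⟩ ⟨y, hy⟩) :
    (G.induce t).Reachable ⟨x, hst hx⟩ ⟨y, hst hy⟩ := by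
  let f : (G.induce s) →g (G.induce t) := ⟨fun a => ⟨a.1, hst a.2⟩, fun {a b} hab => hab⟩
  exact h.map f

lemma walk_avoid {s : Set V} {bb : V} : ∀ {p q : s} (W : (G.induce s).Walk p q),
    (∀ z ∈ W.support, (z : V) ≠ bb) →
    ∃ (hp : (p : V) ∈ s \ {bb}) (hq : (q : V) ∈ s \ {bb}),
      (G.induce (s \ {bb})).Reachable ⟨p, hp⟩ ⟨q, hq⟩
  | p, _, SimpleGraph.Walk.nil, hav =>
    ⟨⟨p.2, hav p (by simp)⟩, ⟨p.2, hav p (by simp)⟩, Reachable.refl _⟩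
  | p, q, SimpleGraph.Walk.cons h W, hav => by
    obtain ⟨hx, hq, hr⟩ := walk_avoid W (fun z hz => hav z (by simp [hz]))
    have hp : (p : V) ∈ s \ {bb} := ⟨p.2, hav p (by simp)⟩
    refine ⟨hp, hq, Reachable.trans (Adj.reachable ?_) hr⟩
    exact h

lemma reach_avoid {s : Set V} {x y bb : V} (hx : x ∈ s) (hy : y ∈ s)
    (h : (G.induce s).Reachable ⟨x, hx⟩ ⟨y, hy⟩)
    (hb : ∀ hbb : bb ∈ s, ¬ (G.induce s).Reachable ⟨x, hx⟩ ⟨bb, hbb⟩) :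
    ∃ (hx' : x ∈ s \ {bb}) (hy' : y ∈ s \ {bb}),
      (G.induce (s \ {bb})).Reachable ⟨x, hx'⟩ ⟨y, hy'⟩ := by
  letI := Classical.decEq V
  obtain ⟨W⟩ := h
  refine walk_avoid W ?_
  intro z hz hzb
  have hzs : bb ∈ s := hzb ▸ z.2
  have : z = (⟨bb, hzs⟩ : s) := Subtype.ext hzb
  exact hb hzs (this ▸ ⟨W.takeUntil z hz⟩)

lemma vi_mem_reservoir {A : Set V} {vi w : V} (h : vi ∈ A) (hn : vi ≠ w) :
    vi ∈ reservoir G A vi w := by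
  refine ⟨⟨h, hn⟩, ⟨h, hn⟩, Reachable.refl _⟩

lemma not_mem_reservoir_self {A : Set V} {vi w : V} : w ∉ reservoir G A vi w := by
  rintro ⟨⟨-, hw⟩, -⟩
  exact hw rfl

lemma reservoir_subset_A {A : Set V} {vi w u : V} (h : u ∈ reservoir G A vi w) :
    u ∈ A ∧ u ≠ w := by
  obtain ⟨⟨h1, h2⟩, -⟩ := h
  exact ⟨h1, h2⟩

lemma mem_reservoir_of_adj {A : Set V} {vi w a b : V} (ha : a ∈ reservoir G A vi w)
    (hadj : G.Adj a b) (hbA : b ∈ A) (hbw : b ≠ w) : b ∈ reservoir G A vi w := by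
  obtain ⟨hu, hv, hr⟩ := ha
  refine ⟨⟨hbA, hbw⟩, hv, hr.trans (Adj.reachable ?_)⟩
  exact hadj

/-- if `b ∉ R(w)`, `b ∈ A`, `b ≠ w`, then `R(w) ⊆ R(b)`. -/
lemma reservoir_subset_reservoir {A : Set V} {vi w b : V} (hw : b ∉ reservoir G A vi w)
    (hbA : b ∈ A) (hbw : b ≠ w) {u : V} (hu : u ∈ reservoir G A vi w) :
    u ∈ reservoir G A vi b := by
  obtain ⟨hu', hv', hr⟩ := hu
  have hb' : ∀ hbb : b ∈ A \ {w}, ¬ (G.induce (A \ {w})).Reachable ⟨vi, hv'⟩ ⟨b, hbb⟩ := by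
    intro hbb hre
    exact hw ⟨hbb, hv', hre⟩
  obtain ⟨hx', hy', hr'⟩ := reach_avoid _ _ hr hb'
  have hsub : (A \ {w}) \ {b} ⊆ A \ {b} := fun z hz => ⟨hz.1.1, hz.2⟩
  exact ⟨⟨hy'.1.1, hy'.2⟩, ⟨hx'.1.1, hx'.2⟩, reach_mono hsub _ _ hr'⟩

/-- Lemma M: in a connected part, if `y ∉ R(x)` then `x ∈ R(y)`. -/
lemma mem_reservoir_of_not_mem_reservoir {A : Set V} {vi x y : V}
    (hconn : (G.induce A).Connected) (hvi : vi ∈ A) (hx : x ∈ A) (hy : y ∈ A)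
    (hxy : x ≠ y) (hyvi : y ≠ vi) (h : y ∉ reservoir G A vi x) :
    x ∈ reservoir G A vi y := by
  letI := Classical.decEq V
  by_cases hxvi : x = vi
  · subst hxvi
    exact vi_mem_reservoir hvi (Ne.symm hyvi)
  obtain ⟨W0⟩ := hconn.preconnected ⟨vi, hvi⟩ ⟨y, hy⟩
  set p := W0.bypass with hpdef
  have hp : p.IsPath := W0.bypass_isPath
  by_cases hxs : (⟨x, hx⟩ : A) ∈ p.support
  · set q := p.takeUntil _ hxs with hqdef
    set d := p.dropUntil _ hxs with hddef
    have hnd := hp.support_nodup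
    rw [← p.take_spec hxs, Walk.support_append] at hnd
    have hyd : (⟨y, hy⟩ : A) ∈ d.support.tail := by
      have h1 : (⟨y, hy⟩ : A) ∈ d.support := Walk.end_mem_support d
      rw [d.support_eq_cons] at h1
      rw [List.mem_cons] at h1
      rcases h1 with h1 | h1
      · exact absurd (congrArg Subtype.val h1.symm) hxy
      · exact h1
    have hav : ∀ z ∈ q.support, (z : V) ≠ y := by
      intro z hz hzy
      have : z = (⟨y, hy⟩ : A) := Subtype.ext hzy
      subst this
      exact (List.disjoint_of_nodup_append hnd) hz hyd
    obtain ⟨hx', hv', hr⟩ := walk_avoid q hav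
    exact ⟨hv', hx', hr⟩
  · exfalso
    have hav : ∀ z ∈ p.support, (z : V) ≠ x := by
      intro z hz hzx
      exact hxs (by rwa [show (⟨x, hx⟩ : A) = z from Subtype.ext hzx.symm])
    obtain ⟨hv', hy', hr⟩ := walk_avoid p hav
    exact h ⟨hy', hv', hr⟩

end GraphAux
section RankAux
open SimpleGraph

lemma hasRank_zero (cfg : Config G k v m) (w : V) : HasRank cfg 0 w ↔ False := by rw [HasRank]

lemma hasRank_one (cfg : Config G k v m) (w : V) :
    HasRank cfg 1 w ↔ (IsCascadeVertex cfg w ∧ ∃ u ∈ cfg.A 0, G.Adj w u) := by rw [HasRank]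

lemma hasRank_succ_succ (cfg : Config G k v m) (t : ℕ) (w : V) :
    HasRank cfg (t+2) w ↔ (IsCascadeVertex cfg w ∧ (¬ ∃ u ∈ cfg.A 0, G.Adj w u) ∧
      RankLink cfg (HasRank cfg (t + 1)) w ∧
      ∀ s, s < t → ¬ RankLink cfg (HasRank cfg (s + 1)) w) := by rw [HasRank]

lemma hasRank_isCascade {cfg : Config G k v m} {s : ℕ} {w : V} (h : HasRank cfg s w) :
    IsCascadeVertex cfg w := by
  match s with
  | 0 => exact ((hasRank_zero cfg w).mp h).elim
  | 1 => exact ((hasRank_one cfg w).mp h).1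
  | t+2 => exact ((hasRank_succ_succ cfg t w).mp h).1

lemma hasRank_unique {cfg : Config G k v m} : ∀ {r₁ r₂ : ℕ} {w : V},
    HasRank cfg r₁ w → HasRank cfg r₂ w → r₁ = r₂ := by
  suffices H : ∀ r₁ r₂ : ℕ, ∀ w : V, r₁ < r₂ → HasRank cfg r₁ w → HasRank cfg r₂ w → False by
    intro r₁ r₂ w h₁ h₂
    rcases lt_trichotomy r₁ r₂ with h | h | h
    · exact absurd h₂ fun h₂ => H _ _ _ h h₁ h₂
    · exact h
    · exact absurd h₁ fun h₁ => H _ _ _ h h₂ h₁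
  intro r₁ r₂ w hlt h₁ h₂
  match r₁, r₂, hlt with
  | 0, _, _ => exact (hasRank_zero cfg w).mp h₁
  | 1, 1, h => exact absurd rfl h.ne
  | 1, t+2, _ =>
    exact ((hasRank_succ_succ cfg t w).mp h₂).2.1 ((hasRank_one cfg w).mp h₁).2
  | t₁+2, t₂+2, hlt =>
    exact ((hasRank_succ_succ cfg t₂ w).mp h₂).2.2.2 t₁ (by omega)
      ((hasRank_succ_succ cfg t₁ w).mp h₁).2.2.1

lemma cascade_part_unique (cfg : Config G k v m) {w : V} {j₁ j₂ : Fin k}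
    (h1 : w ∈ cfg.c j₁) (h2 : w ∈ cfg.c j₂) : j₁ = j₂ := by
  by_contra hne
  exact Set.disjoint_left.mp (cfg.disj hne) (cfg.c_mem j₁ w h1).1 (cfg.c_mem j₂ w h2).1

lemma partA_unique (cfg : Config G k v m) {u : V} {j₁ j₂ : Fin k}
    (h1 : u ∈ cfg.A j₁) (h2 : u ∈ cfg.A j₂) : j₁ = j₂ := by
  by_contra hne
  exact Set.disjoint_left.mp (cfg.disj hne) h1 h2

end RankAux

section ListAux

lemma list_pairwise_rel {α : Type*} {R : α → α → Prop} :
    ∀ {l : List α}, l.Pairwise R → ∀ {a b : α}, a ∈ l → b ∈ l → a ≠ b → R a b ∨ R b a := by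
  intro l hl
  induction hl with
  | nil => intro a b ha _ _; exact absurd ha (by simp)
  | cons hhead _ ih =>
    intro a b ha hb hne
    rcases List.mem_cons.mp ha with rfl | ha'
    · rcases List.mem_cons.mp hb with rfl | hb'
      · exact absurd rfl hne
      · exact Or.inl (hhead b hb')
    · rcases List.mem_cons.mp hb with rfl | hb'
      · exact Or.inr (hhead a ha')
      · exact ih ha' hb' hne

lemma chain'_successor {α : Type*} {R : α → α → Prop} :
    ∀ {l : List α}, l.Chain' R → l.Nodup → ∀ {x : α} (h : l ≠ []), x ∈ l →
      x ≠ l.getLast h → ∃ y ∈ l, y ≠ x ∧ R x y := by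
  intro l
  induction l with
  | nil => intro _ _ _ h; exact absurd rfl h
  | cons a t ih =>
    intro hc hnd x h hx hlast
    rcases t.eq_nil_or_concat with rfl | ⟨_, _, hne⟩
    · simp only [List.mem_singleton] at hx
      exact absurd (by simp [hx]) hlast
    have htne : t ≠ [] := by rintro rfl; simp at hne
    rcases List.mem_cons.mp hx with rfl | hx
    · obtain ⟨c, t', rfl⟩ := List.exists_cons_of_ne_nil htne
      refine ⟨c, by simp, ?_, (List.isChain_cons_cons.mp hc).1⟩
      intro hca
      simp [hca] at hnd
    · have hlast' : x ≠ t.getLast htne := by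
        rwa [List.getLast_cons htne] at hlast
      obtain ⟨y, hy, hyx, hr⟩ := ih hc.tail hnd.of_cons htne hx hlast'
      exact ⟨y, List.mem_cons_of_mem _ hy, hyx, hr⟩

lemma mem_dropWhile_cases {α : Type*} {R : α → α → Prop} (p : α → Bool) :
    ∀ {l : List α}, l.Pairwise R → ∀ {x : α}, x ∈ l.dropWhile p →
      (¬ p x = true) ∨ ∃ y ∈ l, (¬ p y = true) ∧ R y x := by
  intro l
  induction l with
  | nil => intro _ x hx; simp at hx
  | cons a t ih =>
    intro hp x hx
    rw [List.dropWhile_cons] at hx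
    by_cases hpa : p a = true
    · simp only [hpa, if_true] at hx
      rcases ih hp.of_cons hx with h | ⟨y, hy, h1, h2⟩
      · exact Or.inl h
      · exact Or.inr ⟨y, List.mem_cons_of_mem _ hy, h1, h2⟩
    · simp only [hpa, if_false] at hx
      rcases List.mem_cons.mp hx with rfl | hx
      · exact Or.inl hpa
      · exact Or.inr ⟨a, by simp, hpa, (List.pairwise_cons.mp hp).1 x hx⟩

end ListAux
section Stability
open SimpleGraph

lemma stability {cfg cfg' : Config G k v m} {i : Fin k} {b : V} {r : ℕ}
    (hr : 1 ≤ r)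
    (hA : cfg'.A = cfg.A)
    (hbc' : b ∈ cfg'.c i)
    (hbuniq : ∀ j, j ≠ i → b ∉ cfg'.c j)
    (hbold : ∀ j, b ∉ cfg.c j)
    (hsub : ∀ j, ∀ w, w ∈ cfg'.c j → w ≠ b →
      w ∈ cfg.c j ∧ ∃ s, HasRank cfg s w ∧ (s < r ∨ (s = r ∧ j ≠ i)))
    (hkept : ∀ j, ∀ w, w ∈ cfg.c j → ∀ s, HasRank cfg s w →
      (s < r ∨ (s = r ∧ j ≠ i)) → w ∈ cfg'.c j)
    (hb1 : r = 1 → ∃ u ∈ cfg.A 0, G.Adj b u)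
    (hb2 : 2 ≤ r → (¬ ∃ u ∈ cfg.A 0, G.Adj b u) ∧
      ∃ j, j ≠ i ∧ ∃ w' ∈ cfg.c j, HasRank cfg (r-1) w' ∧
        ∃ u ∈ reservoir G (cfg.A j) (v j) w', G.Adj b u)
    (hbmin : ∀ t, t + 2 < r →
      ¬ ∃ j, j ≠ i ∧ ∃ w' ∈ cfg.c j, HasRank cfg (t+1) w' ∧
        ∃ u ∈ reservoir G (cfg.A j) (v j) w', G.Adj b u) :
    ∀ s, s ≤ r → ∀ w, (HasRank cfg' s w ↔
      ((HasRank cfg s w ∧ (s < r ∨ w ∉ cfg.c i)) ∨ (w = b ∧ s = r))) := by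
  have hnotcfg_b : ∀ s', ¬ HasRank cfg s' b := by
    intro s' hs'
    obtain ⟨j, hj⟩ := hasRank_isCascade hs'
    exact hbold j hj
  intro s
  induction s using Nat.strong_induction_on with
  | _ s IH =>
  intro hsr w
  -- link translation helpers
  have link_fwd : ∀ t w₀, t + 1 < s → w₀ ≠ b →
      RankLink cfg' (HasRank cfg' (t+1)) w₀ → RankLink cfg (HasRank cfg (t+1)) w₀ := by
    rintro t w₀ hts hw₀b ⟨i₁, j, hij, hw₀, w', hw', hw'rank, u, hu, hadj⟩
    by_cases hw'eq : w' = b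
    · subst hw'eq
      rcases (IH (t+1) hts (by omega) w').mp hw'rank with ⟨h1, -⟩ | ⟨-, h2⟩
      · exact absurd h1 (hnotcfg_b _)
      · omega
    · obtain ⟨hw'c, -⟩ := hsub j w' hw' hw'eq
      have hw'r : HasRank cfg (t+1) w' := by
        rcases (IH (t+1) hts (by omega) w').mp hw'rank with ⟨h1, -⟩ | ⟨h2, -⟩
        · exact h1
        · exact absurd h2 hw'eq
      rw [hA] at hu
      exact ⟨i₁, j, hij, (hsub i₁ w₀ hw₀ hw₀b).1, w', hw'c, hw'r, u, hu, hadj⟩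
  have link_bwd : ∀ t w₀, t + 1 < s → w₀ ≠ b → (∃ i₁, w₀ ∈ cfg'.c i₁) →
      RankLink cfg (HasRank cfg (t+1)) w₀ → RankLink cfg' (HasRank cfg' (t+1)) w₀ := by
    rintro t w₀ hts hw₀b ⟨i₁, hw₀c'⟩ ⟨i₂, j, hij, hw₀c, w', hw'c, hw'rank, u, hu, hadj⟩
    have hi12 : i₁ = i₂ := cascade_part_unique cfg (hsub i₁ w₀ hw₀c' hw₀b).1 hw₀c
    subst hi12
    have hw'kept : w' ∈ cfg'.c j := hkept j w' hw'c (t+1) hw'rank (Or.inl (by omega))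
    have hw'rank' : HasRank cfg' (t+1) w' :=
      (IH (t+1) hts (by omega) w').mpr (Or.inl ⟨hw'rank, Or.inl (by omega)⟩)
    rw [← hA] at hu
    exact ⟨i₁, j, hij, hw₀c', w', hw'kept, hw'rank', u, hu, hadj⟩
  by_cases hwb : w = b
  · subst hwb
    constructor
    · intro h'
      right
      refine ⟨rfl, ?_⟩
      by_contra hsne
      have hslt : s < r := lt_of_le_of_ne hsr hsne
      cases s with
      | zero => exact (hasRank_zero cfg' w).mp h'
      | succ s1 =>
        cases s1 with
        | zero =>
          obtain ⟨-, hA0⟩ := (hasRank_one cfg' w).mp h'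
          rw [hA] at hA0
          exact (hb2 (by omega)).1 hA0
        | succ t =>
          obtain ⟨-, -, hlink, -⟩ := (hasRank_succ_succ cfg' t w).mp h'
          obtain ⟨i₁, j, hij, hbc₁, w', hw', hw'rank, u, hu, hadj⟩ := hlink
          have hi₁ : i₁ = i := by
            by_contra hne
            exact hbuniq i₁ hne hbc₁
          subst hi₁
          have hw'b : w' ≠ w := fun he => hbuniq j (Ne.symm hij) (he ▸ hw')
          obtain ⟨hw'c, -⟩ := hsub j w' hw' hw'b
          have hw'cfg : HasRank cfg (t+1) w' := by
            rcases (IH (t+1) (by omega) (by omega) w').mp hw'rank with ⟨h1, -⟩ | ⟨h2, -⟩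
            · exact h1
            · exact absurd h2 hw'b
          rw [hA] at hu
          exact hbmin t (by omega) ⟨j, Ne.symm hij, w', hw'c, hw'cfg, u, hu, hadj⟩
    · rintro (⟨h1, -⟩ | ⟨-, rfl⟩)
      · exact absurd h1 (hnotcfg_b s)
      · cases s with
        | zero => omega
        | succ r1 =>
          cases r1 with
          | zero => exact (hasRank_one cfg' w).mpr ⟨⟨i, hbc'⟩, by rw [hA]; exact hb1 rfl⟩
          | succ t₀ =>
            obtain ⟨hnA0, j, hji, w', hw'c, hw'rank, u, hu, hadj⟩ := hb2 (by omega)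
            have hw'rank1 : HasRank cfg (t₀+1) w' := by
              have : t₀ + 1 + 1 - 1 = t₀ + 1 := by omega
              rwa [this] at hw'rank
            refine (hasRank_succ_succ cfg' t₀ w).mpr ⟨⟨i, hbc'⟩, ?_, ?_, ?_⟩
            · rw [hA]; exact hnA0
            · have hkeptw' : w' ∈ cfg'.c j :=
                hkept j w' hw'c (t₀+1) hw'rank1 (Or.inl (by omega))
              have hw'r' : HasRank cfg' (t₀+1) w' :=
                (IH (t₀+1) (by omega) (by omega) w').mpr
                  (Or.inl ⟨hw'rank1, Or.inl (by omega)⟩)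
              rw [← hA] at hu
              exact ⟨i, j, Ne.symm hji, hbc', w', hkeptw', hw'r', u, hu, hadj⟩
            · intro s' hs' hlink
              obtain ⟨i₁, j₁, hij₁, hbc₁, w₁, hw₁, hw₁rank, u₁, hu₁, hadj₁⟩ := hlink
              have hi₁ : i₁ = i := by
                by_contra hne
                exact hbuniq i₁ hne hbc₁
              subst hi₁
              have hw₁b : w₁ ≠ w := fun he => hbuniq j₁ (Ne.symm hij₁) (he ▸ hw₁)
              obtain ⟨hw₁c, -⟩ := hsub j₁ w₁ hw₁ hw₁b
              have hw₁cfg : HasRank cfg (s'+1) w₁ := by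
                rcases (IH (s'+1) (by omega) (by omega) w₁).mp hw₁rank with ⟨h1, -⟩ | ⟨h2, -⟩
                · exact h1
                · exact absurd h2 hw₁b
              rw [hA] at hu₁
              exact hbmin s' (by omega) ⟨j₁, Ne.symm hij₁, w₁, hw₁c, hw₁cfg, u₁, hu₁, hadj₁⟩
  · constructor
    · intro h'
      obtain ⟨i₁, hw₁⟩ := hasRank_isCascade h'
      have hRHS1 : HasRank cfg s w := by
        cases s with
        | zero => exact ((hasRank_zero cfg' w).mp h').elim
        | succ s1 =>
          cases s1 with
          | zero =>
            obtain ⟨-, hA0⟩ := (hasRank_one cfg' w).mp h'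
            rw [hA] at hA0
            exact (hasRank_one cfg w).mpr ⟨⟨i₁, (hsub i₁ w hw₁ hwb).1⟩, hA0⟩
          | succ t =>
            obtain ⟨-, hnA0, hlink, hmin⟩ := (hasRank_succ_succ cfg' t w).mp h'
            rw [hA] at hnA0
            refine (hasRank_succ_succ cfg t w).mpr ⟨⟨i₁, (hsub i₁ w hw₁ hwb).1⟩, hnA0,
              link_fwd t w (by omega) hwb hlink, ?_⟩
            intro s' hs' hl
            exact hmin s' hs' (link_bwd s' w (by omega) hwb ⟨i₁, hw₁⟩ hl)
      left
      refine ⟨hRHS1, ?_⟩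
      rcases lt_or_eq_of_le hsr with hlt | heq
      · exact Or.inl hlt
      · right
        obtain ⟨hwc, s₁, hs₁rank, hcond⟩ := hsub i₁ w hw₁ hwb
        have hs₁ : s₁ = s := hasRank_unique hs₁rank hRHS1
        subst hs₁
        rcases hcond with hc | ⟨-, hne⟩
        · omega
        · intro hwi
          exact hne (cascade_part_unique cfg hwc hwi)
    · rintro (⟨hcfg, hcond⟩ | ⟨rfl, -⟩)
      · obtain ⟨i₁, hw₁⟩ := hasRank_isCascade hcfg
        have hcond' : s < r ∨ (s = r ∧ i₁ ≠ i) := by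
          rcases hcond with hc | hc
          · exact Or.inl hc
          · rcases lt_or_eq_of_le hsr with hlt | heq
            · exact Or.inl hlt
            · exact Or.inr ⟨heq, fun he => hc (he ▸ hw₁)⟩
        have hw₁' : w ∈ cfg'.c i₁ := hkept i₁ w hw₁ s hcfg hcond'
        cases s with
        | zero => exact ((hasRank_zero cfg w).mp hcfg).elim
        | succ s1 =>
          cases s1 with
          | zero =>
            obtain ⟨-, hA0⟩ := (hasRank_one cfg w).mp hcfg
            rw [← hA] at hA0
            exact (hasRank_one cfg' w).mpr ⟨⟨i₁, hw₁'⟩, hA0⟩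
          | succ t =>
            obtain ⟨-, hnA0, hlink, hmin⟩ := (hasRank_succ_succ cfg t w).mp hcfg
            rw [← hA] at hnA0
            refine (hasRank_succ_succ cfg' t w).mpr ⟨⟨i₁, hw₁'⟩, hnA0,
              link_bwd t w (by omega) hwb ⟨i₁, hw₁'⟩ hlink, ?_⟩
            intro s' hs' hl
            exact hmin s' hs' (link_fwd s' w (by omega) hwb hl)
      · exact absurd rfl hwb
end Stability
section Main
open SimpleGraph

lemma roptimal_zero (cfg : Config G k v m) : ROptimal cfg 0 ↔ Valid cfg := by rw [ROptimal]

lemma roptimal_succ (cfg : Config G k v m) (n : ℕ) : ROptimal cfg (n+1) ↔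
    (ROptimal cfg n ∧ ∀ cfg'' : Config G k v m, ROptimal cfg'' n →
      rho cfg'' (n + 1) ≤ rho cfg (n + 1)) := by rw [ROptimal]

end Main

/-- **Lemma 2 of Hoyer–Thomas.**  In the setting of Theorem 2, suppose an
optimal configuration contains an edge `ab` of `G` such that (1) `a` is in
part `0` or in a reservoir, and (2) `b` is in part `i` for some `i ≠ 0`,
`b ≠ v i`, and `b` is not in any reservoir.  Then the cascade of part `i` is
not null and `b` is its last vertex. -/
theorem edge_to_cascade_end {V : Type} [Fintype V]
    (G : SimpleGraph V) (k : ℕ) [NeZero k] (hk : 2 ≤ k)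
    (hconn : KConnected G k)
    (v : Fin k → V) (hv : Function.Injective v)
    (m : Fin k → ℕ) (hm : ∀ i, 0 < m i)
    (hsum : ∑ i, m i < Fintype.card V)
    (cfg : Config G k v m) (hopt : Optimal cfg)
    (a b : V) (hab : G.Adj a b)
    (ha : a ∈ cfg.A 0 ∨ InReservoir cfg a)
    (i : Fin k) (hi : i ≠ 0)
    (hbA : b ∈ cfg.A i) (hbv : b ≠ v i)
    (hbres : ¬ InReservoir cfg b) :
    ∃ h : cfg.c i ≠ [], (cfg.c i).getLast h = b := by
  classical
  have hvalid : Valid cfg := (roptimal_zero cfg).mp (hopt 0)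
  have hbnores : ∀ j, ∀ w ∈ cfg.c j, b ∉ reservoir G (cfg.A j) (v j) w := by
    intro j w hw hmem
    exact hbres ⟨j, w, hw, hmem⟩
  -- Step I : b is a cascade vertex of part i
  have hbc : b ∈ cfg.c i := by
    by_contra hbc
    have hbold : ∀ j, b ∉ cfg.c j := by
      intro j hj
      have hji : j = i := partA_unique cfg (cfg.c_mem j b hj).1 hbA
      exact hbc (hji ▸ hj)
    -- define the rank r that b would get
    obtain ⟨r, hr1, hb1, hb2, hbmin⟩ : ∃ r : ℕ, 1 ≤ r ∧
        (r = 1 → ∃ u ∈ cfg.A 0, G.Adj b u) ∧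
        (2 ≤ r → (¬ ∃ u ∈ cfg.A 0, G.Adj b u) ∧
          ∃ j, j ≠ i ∧ ∃ w' ∈ cfg.c j, HasRank cfg (r-1) w' ∧
            ∃ u ∈ reservoir G (cfg.A j) (v j) w', G.Adj b u) ∧
        (∀ t, t + 2 < r →
          ¬ ∃ j, j ≠ i ∧ ∃ w' ∈ cfg.c j, HasRank cfg (t+1) w' ∧
            ∃ u ∈ reservoir G (cfg.A j) (v j) w', G.Adj b u) := by
      by_cases hA0 : ∃ u ∈ cfg.A 0, G.Adj b u
      · exact ⟨1, le_refl 1, fun _ => hA0, fun h => absurd h (by omega),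
          fun t ht => absurd ht (by omega)⟩
      · have haR : InReservoir cfg a := by
          rcases ha with h | h
          · exact absurd ⟨a, h, hab.symm⟩ hA0
          · exact h
        obtain ⟨j, w₀, hw₀, haR⟩ := haR
        have hji : j ≠ i := by
          rintro rfl
          have hbw₀ : b ≠ w₀ := fun he => hbold j (he ▸ hw₀)
          exact hbnores j w₀ hw₀ (mem_reservoir_of_adj haR hab.symm.symm hbA hbw₀)
        obtain ⟨r₀, hr₀⟩ := hvalid.1 w₀ ⟨j, hw₀⟩
        have hr₀1 : 1 ≤ r₀ := by
          by_contra h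
          have : r₀ = 0 := by omega
          exact (hasRank_zero cfg w₀).mp (this ▸ hr₀)
        have hex : ∃ t : ℕ, ∃ j, j ≠ i ∧ ∃ w' ∈ cfg.c j, HasRank cfg (t+1) w' ∧
            ∃ u ∈ reservoir G (cfg.A j) (v j) w', G.Adj b u := by
          refine ⟨r₀ - 1, j, hji, w₀, hw₀, ?_, a, haR, hab.symm⟩
          have : r₀ - 1 + 1 = r₀ := by omega
          rwa [this]
        refine ⟨Nat.find hex + 2, by omega, fun h => absurd h (by omega), fun _ => ⟨hA0, ?_⟩,
          fun t ht => Nat.find_min hex (by omega)⟩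
        have : Nat.find hex + 2 - 1 = Nat.find hex + 1 := by omega
        rw [this]
        exact Nat.find_spec hex
    -- the truncation predicates
    obtain ⟨pi, hpi⟩ : ∃ p : V → Bool, ∀ w, p w = true ↔ (∃ s, s < r ∧ HasRank cfg s w) :=
      ⟨fun w => decide (∃ s, s < r ∧ HasRank cfg s w), fun w => by simp⟩
    obtain ⟨pj, hpj⟩ : ∃ p : V → Bool, ∀ w, p w = true ↔ (∃ s, s ≤ r ∧ HasRank cfg s w) :=
      ⟨fun w => decide (∃ s, s ≤ r ∧ HasRank cfg s w), fun w => by simp⟩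
    -- dropped vertices have high rank
    have hdropj : ∀ j, ∀ w ∈ (cfg.c j).dropWhile pj, ∀ s, HasRank cfg s w → ¬ s ≤ r := by
      intro j w hw s hs hsle
      rcases mem_dropWhile_cases pj (hvalid.2 j) hw with hnp | ⟨y, hy, hnp, hRel⟩
      · exact hnp ((hpj w).mpr ⟨s, hsle, hs⟩)
      · obtain ⟨ry, hry⟩ := hvalid.1 y ⟨j, hy⟩
        have : ry < s := hRel ry s hry hs
        exact hnp ((hpj y).mpr ⟨ry, by omega, hry⟩)
    have hdropi : ∀ w ∈ (cfg.c i).dropWhile pi, ∀ s, HasRank cfg s w → ¬ s < r := by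
      intro w hw s hs hsle
      rcases mem_dropWhile_cases pi (hvalid.2 i) hw with hnp | ⟨y, hy, hnp, hRel⟩
      · exact hnp ((hpi w).mpr ⟨s, hsle, hs⟩)
      · obtain ⟨ry, hry⟩ := hvalid.1 y ⟨i, hy⟩
        have : ry < s := hRel ry s hry hs
        exact hnp ((hpi y).mpr ⟨ry, by omega, hry⟩)
    -- kept vertices
    have hkeptj : ∀ j, ∀ w ∈ cfg.c j, ∀ s, HasRank cfg s w → s ≤ r →
        w ∈ (cfg.c j).takeWhile pj := by
      intro j w hw s hs hsle
      rw [← List.takeWhile_append_dropWhile (p := pj) (l := cfg.c j)] at hw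
      rcases List.mem_append.mp hw with h | h
      · exact h
      · exact absurd hsle (hdropj j w h s hs)
    have hkepti : ∀ w ∈ cfg.c i, ∀ s, HasRank cfg s w → s < r →
        w ∈ (cfg.c i).takeWhile pi := by
      intro w hw s hs hsle
      rw [← List.takeWhile_append_dropWhile (p := pi) (l := cfg.c i)] at hw
      rcases List.mem_append.mp hw with h | h
      · exact h
      · exact absurd hsle (hdropi w h s hs)
    -- the new configuration
    obtain ⟨cfg', hcA, hcci, hccj⟩ : ∃ cfg' : Config G k v m, cfg'.A = cfg.A ∧
        cfg'.c i = (cfg.c i).takeWhile pi ++ [b] ∧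
        (∀ j, j ≠ i → cfg'.c j = (cfg.c j).takeWhile pj) := by
      refine ⟨⟨cfg.A,
        fun j => if j = i then (cfg.c i).takeWhile pi ++ [b] else (cfg.c j).takeWhile pj,
        cfg.disj, cfg.conn, cfg.hcard, cfg.hmem, ?_, ?_, ?_, ?_⟩, rfl, by simp,
        fun j hj => by simp [hj]⟩
      · rw [if_neg (fun h => hi h.symm), cfg.c_zero, List.takeWhile_nil]
      · intro j
        by_cases hj : j = i
        · subst hj
          rw [if_pos rfl, List.nodup_append]
          refine ⟨List.Nodup.sublist (List.takeWhile_prefix pi).sublist (cfg.c_nodup j),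
            List.nodup_singleton b, ?_⟩
          intro x hx y hx2 hxy
          rw [List.mem_singleton] at hx2
          subst hx2
          exact hbold j ((List.takeWhile_prefix pi).sublist.subset (hxy ▸ hx))
        · rw [if_neg hj]
          exact List.Nodup.sublist (List.takeWhile_prefix pj).sublist (cfg.c_nodup j)
      · intro j w hw
        by_cases hj : j = i
        · subst hj
          rw [if_pos rfl] at hw
          rcases List.mem_append.mp hw with h | h
          · exact cfg.c_mem j w ((List.takeWhile_prefix pi).sublist.subset h)
          · rw [List.mem_singleton] at h
            subst h
            exact ⟨hbA, hbv⟩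
        · rw [if_neg hj] at hw
          exact cfg.c_mem j w ((List.takeWhile_prefix pj).sublist.subset hw)
      · intro j
        by_cases hj : j = i
        · subst hj
          rw [if_pos rfl]; show List.IsChain _ _; rw [List.isChain_append]
          refine ⟨(cfg.c_chain j).prefix (List.takeWhile_prefix pi), List.isChain_singleton b, ?_⟩
          intro x hx y hy
          rw [List.head?_cons, Option.mem_some_iff] at hy
          subst hy
          exact hbnores j x ((List.takeWhile_prefix pi).sublist.subset
            (List.mem_of_mem_getLast? hx))
        · rw [if_neg hj]
          exact (cfg.c_chain j).prefix (List.takeWhile_prefix pj)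
    -- stability hypotheses
    have hbc' : b ∈ cfg'.c i := by
      rw [hcci]
      exact List.mem_append.mpr (Or.inr (List.mem_singleton_self b))
    have hbuniq : ∀ j, j ≠ i → b ∉ cfg'.c j := by
      intro j hj hbj
      rw [hccj j hj] at hbj
      exact hbold j ((List.takeWhile_prefix pj).sublist.subset hbj)
    have hsub : ∀ j, ∀ w, w ∈ cfg'.c j → w ≠ b →
        w ∈ cfg.c j ∧ ∃ s, HasRank cfg s w ∧ (s < r ∨ (s = r ∧ j ≠ i)) := by
      intro j w hw hwb
      by_cases hj : j = i
      · subst hj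
        rw [hcci] at hw
        rcases List.mem_append.mp hw with h | h
        · obtain ⟨s, hs1, hs2⟩ := (hpi w).mp (List.mem_takeWhile_imp h)
          exact ⟨(List.takeWhile_prefix pi).sublist.subset h, s, hs2, Or.inl hs1⟩
        · rw [List.mem_singleton] at h
          exact absurd h hwb
      · rw [hccj j hj] at hw
        obtain ⟨s, hs1, hs2⟩ := (hpj w).mp (List.mem_takeWhile_imp hw)
        refine ⟨(List.takeWhile_prefix pj).sublist.subset hw, s, hs2, ?_⟩
        rcases lt_or_eq_of_le hs1 with h | h
        · exact Or.inl h
        · exact Or.inr ⟨h, hj⟩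
    have hkept : ∀ j, ∀ w, w ∈ cfg.c j → ∀ s, HasRank cfg s w →
        (s < r ∨ (s = r ∧ j ≠ i)) → w ∈ cfg'.c j := by
      intro j w hw s hs hcond
      by_cases hj : j = i
      · subst hj
        have hslt : s < r := by
          rcases hcond with h | ⟨-, h⟩
          · exact h
          · exact absurd rfl h
        rw [hcci]
        exact List.mem_append.mpr (Or.inl (hkepti w hw s hs hslt))
      · rw [hccj j hj]
        exact hkeptj j w hw s hs (by rcases hcond with h | ⟨h, -⟩ <;> omega)
    have hstab := stability hr1 hcA hbc' hbuniq hbold hsub hkept hb1 hb2 hbmin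
    -- validity of cfg'
    have hbrank' : HasRank cfg' r b := (hstab r le_rfl b).mpr (Or.inr ⟨rfl, rfl⟩)
    have hcanon : ∀ j, ∀ w, w ∈ cfg'.c j → w ≠ b →
        ∃ s, s ≤ r ∧ HasRank cfg s w ∧ HasRank cfg' s w := by
      intro j w hw hwb
      obtain ⟨hwc, s, hs, hcond⟩ := hsub j w hw hwb
      have hside : s < r ∨ w ∉ cfg.c i := by
        rcases hcond with h | ⟨he, hj⟩
        · exact Or.inl h
        · refine Or.inr fun hwi => hj (cascade_part_unique cfg hwc hwi)
      have hsle : s ≤ r := by rcases hcond with h | ⟨h, -⟩ <;> omega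
      exact ⟨s, hsle, hs, (hstab s hsle w).mpr (Or.inl ⟨hs, hside⟩)⟩
    have hvalid' : Valid cfg' := by
      constructor
      · rintro w ⟨j, hw⟩
        by_cases hwb : w = b
        · exact ⟨r, hwb ▸ hbrank'⟩
        · obtain ⟨s, -, -, hs⟩ := hcanon j w hw hwb
          exact ⟨s, hs⟩
      · intro j
        by_cases hj : j = i
        · subst hj
          rw [hcci, List.pairwise_append]
          have hpw : ((cfg.c j).takeWhile pi).Pairwise fun x y =>
              ∀ ra rb, HasRank cfg ra x → HasRank cfg rb y → ra < rb :=
            List.Pairwise.sublist (List.takeWhile_prefix pi).sublist (hvalid.2 j)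
          refine ⟨List.Pairwise.imp_of_mem ?_ hpw, List.pairwise_singleton _ b, ?_⟩
          · intro x y hx hy hRel ra rb hra hrb
            have hxb : x ≠ b := fun he =>
              hbold j ((List.takeWhile_prefix pi).sublist.subset (he ▸ hx))
            have hyb : y ≠ b := fun he =>
              hbold j ((List.takeWhile_prefix pi).sublist.subset (he ▸ hy))
            have hx' : x ∈ cfg'.c j := by
              rw [hcci]; exact List.mem_append.mpr (Or.inl hx)
            have hy' : y ∈ cfg'.c j := by
              rw [hcci]; exact List.mem_append.mpr (Or.inl hy)
            obtain ⟨sx, -, hsx, hsx'⟩ := hcanon j x hx' hxb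
            obtain ⟨sy, -, hsy, hsy'⟩ := hcanon j y hy' hyb
            have h1 : ra = sx := hasRank_unique hra hsx'
            have h2 : rb = sy := hasRank_unique hrb hsy'
            have h3 := hRel sx sy hsx hsy
            omega
          · intro x hx y hy
            rw [List.mem_singleton] at hy
            intro ra rb hra hrb
            have hxb : x ≠ b := fun he =>
              hbold j ((List.takeWhile_prefix pi).sublist.subset (he ▸ hx))
            have hx' : x ∈ cfg'.c j := by
              rw [hcci]; exact List.mem_append.mpr (Or.inl hx)
            obtain ⟨sx, -, hsx, hsx'⟩ := hcanon j x hx' hxb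
            have h1 : ra = sx := hasRank_unique hra hsx'
            have h2 : rb = r := hasRank_unique hrb (by rw [hy]; exact hbrank')
            obtain ⟨s0, hs01, hs02⟩ := (hpi x).mp (List.mem_takeWhile_imp hx)
            have : s0 = sx := hasRank_unique hs02 hsx
            omega
        · rw [hccj j hj]
          have hpw : ((cfg.c j).takeWhile pj).Pairwise fun x y =>
              ∀ ra rb, HasRank cfg ra x → HasRank cfg rb y → ra < rb :=
            List.Pairwise.sublist (List.takeWhile_prefix pj).sublist (hvalid.2 j)
          refine List.Pairwise.imp_of_mem ?_ hpw
          intro x y hx hy hRel ra rb hra hrb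
          have hxb : x ≠ b := fun he =>
            hbold j ((List.takeWhile_prefix pj).sublist.subset (he ▸ hx))
          have hyb : y ≠ b := fun he =>
            hbold j ((List.takeWhile_prefix pj).sublist.subset (he ▸ hy))
          have hx' : x ∈ cfg'.c j := by rw [hccj j hj]; exact hx
          have hy' : y ∈ cfg'.c j := by rw [hccj j hj]; exact hy
          obtain ⟨sx, -, hsx, hsx'⟩ := hcanon j x hx' hxb
          obtain ⟨sy, -, hsy, hsy'⟩ := hcanon j y hy' hyb
          have h1 : ra = sx := hasRank_unique hra hsx'
          have h2 : rb = sy := hasRank_unique hrb hsy'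
          have h3 := hRel sx sy hsx hsy
          omega
    -- rho is unchanged below r
    have hrho_eq : ∀ s, s < r → rho cfg' s = rho cfg s := by
      intro s hs
      unfold rho
      simp only [hcA]
      congr 1
      ext u
      simp only [Set.mem_setOf_eq]
      constructor
      · rintro ⟨j, w, hw, hrank, hres⟩
        have hwb : w ≠ b := by
          rintro rfl
          rcases (hstab s (by omega) w).mp hrank with ⟨h1, -⟩ | ⟨-, h2⟩
          · obtain ⟨j₁, hj₁⟩ := hasRank_isCascade h1
            exact hbold j₁ hj₁
          · omega
        have h1 : HasRank cfg s w := by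
          rcases (hstab s (by omega) w).mp hrank with ⟨h1, -⟩ | ⟨h2, -⟩
          · exact h1
          · exact absurd h2 hwb
        exact ⟨j, w, (hsub j w hw hwb).1, h1, hres⟩
      · rintro ⟨j, w, hw, hrank, hres⟩
        have hw' : w ∈ cfg'.c j := hkept j w hw s hrank (Or.inl hs)
        have h1 : HasRank cfg' s w :=
          (hstab s (by omega) w).mpr (Or.inl ⟨hrank, Or.inl hs⟩)
        exact ⟨j, w, hw', h1, hres⟩
    -- rho strictly increases at r
    have hrho_lt : rho cfg r < rho cfg' r := by
      unfold rho
      simp only [hcA]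
      refine Set.ncard_lt_ncard ?_ (Set.toFinite _)
      rw [Set.ssubset_def]
      constructor
      · rintro u ⟨j, w, hw, hrank, hres⟩
        have hwb : w ≠ b := fun he => hbold j (he ▸ hw)
        by_cases hj : j = i
        · subst hj
          have hures : u ∈ reservoir G (cfg.A j) (v j) b :=
            reservoir_subset_reservoir (hbnores j w hw) hbA (Ne.symm hwb) hres
          exact ⟨j, b, hbc', hbrank', hures⟩
        · have hw' : w ∈ cfg'.c j := hkept j w hw r hrank (Or.inr ⟨rfl, hj⟩)
          have hnotci : w ∉ cfg.c i := fun hwi => hj (cascade_part_unique cfg hw hwi)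
          have h1 : HasRank cfg' r w :=
            (hstab r le_rfl w).mpr (Or.inl ⟨hrank, Or.inr hnotci⟩)
          exact ⟨j, w, hw', h1, hres⟩
      · intro hsup
        by_cases hex : ∃ w ∈ cfg.c i, HasRank cfg r w
        · obtain ⟨w, hw, hwr⟩ := hex
          have hwb : w ≠ b := fun he => hbold i (he ▸ hw)
          have hwres : w ∈ reservoir G (cfg.A i) (v i) b :=
            mem_reservoir_of_not_mem_reservoir (cfg.conn i) (cfg.hmem i)
              (cfg.c_mem i w hw).1 hbA hwb hbv (hbnores i w hw)
          obtain ⟨j, w'', hw''c, hw''r, hwres2⟩ := hsup ⟨i, b, hbc', hbrank', hwres⟩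
          have hji : j = i := partA_unique cfg (reservoir_subset_A hwres2).1 (cfg.c_mem i w hw).1
          subst hji
          have hne2 : w'' ≠ w := fun he => (reservoir_subset_A hwres2).2 he.symm
          rcases list_pairwise_rel (hvalid.2 j) hw''c hw hne2 with hR | hR
          · exact absurd (hR r r hw''r hwr) (lt_irrefl r)
          · exact absurd (hR r r hwr hw''r) (lt_irrefl r)
        · have hvres : v i ∈ reservoir G (cfg.A i) (v i) b :=
            vi_mem_reservoir (cfg.hmem i) (Ne.symm hbv)
          obtain ⟨j, w'', hw''c, hw''r, hwres2⟩ := hsup ⟨i, b, hbc', hbrank', hvres⟩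
          have hji : j = i := partA_unique cfg (reservoir_subset_A hwres2).1 (cfg.hmem i)
          subst hji
          exact hex ⟨w'', hw''c, hw''r⟩
    -- cfg' is (r-1)-optimal, contradiction with r-optimality of cfg
    have hropt' : ∀ s, s < r → ROptimal cfg' s := by
      intro s
      induction s with
      | zero => exact fun _ => (roptimal_zero cfg').mpr hvalid'
      | succ n ihn =>
        intro hlt
        refine (roptimal_succ cfg' n).mpr ⟨ihn (by omega), ?_⟩
        intro cfg'' h''
        rw [hrho_eq (n+1) hlt]
        exact ((roptimal_succ cfg n).mp (hopt (n+1))).2 cfg'' h''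
    obtain ⟨r', rfl⟩ : ∃ r', r = r' + 1 := ⟨r - 1, by omega⟩
    have hle := ((roptimal_succ cfg r').mp (hopt (r'+1))).2 cfg' (hropt' r' (by omega))
    omega
  -- Step II : b is the last vertex of the cascade
  have hne : cfg.c i ≠ [] := by
    intro h
    rw [h] at hbc
    exact List.not_mem_nil hbc
  refine ⟨hne, ?_⟩
  by_contra hl
  obtain ⟨y, hy, hyb, hRel⟩ :=
    chain'_successor (cfg.c_chain i) (cfg.c_nodup i) hne hbc (fun he => hl he.symm)
  have : b ∈ reservoir G (cfg.A i) (v i) y :=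
    mem_reservoir_of_not_mem_reservoir (cfg.conn i) (cfg.hmem i) hbA
      (cfg.c_mem i y hy).1 (Ne.symm hyb) (cfg.c_mem i y hy).2 hRel
  exact hbres ⟨i, y, hy, this⟩
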